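/- Suppose z : ℝ → ℝ is differentiable, positive and nonincreasing on [T, ∞), P continuous nonnegative, and z'(t) + P(t)·z(t−1) ≤ 0 for all t > T. Then liminf_{t→∞} ∫_{t−1}^{t} P(s) ds ≤ 1/e. Consequently, if liminf_{t→∞} ∫_{t−1}^{t} P(s) ds > 1/e, the inequality z' + P(t) z(t−1) ≤ 0 has no eventually positive nonincreasing solution. -/

import Mathlib

set_option maxHeartbeats 1000000

open Filter intervalIntegral

section AuxHelper

/-- If `F' + Q ≤ 0` on `(a,b)`, with `F` differentiable and `Q` continuous on a
neighborhood `(c, ∞)` of `[a,b]`, then `∫_a^b Q ≤ F a - F b`. -/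
lemma aux_integral_le_sub (F Q : ℝ → ℝ) {a b c : ℝ} (hca : c < a) (hab : a ≤ b)
    (hF : ∀ t, c < t → DifferentiableAt ℝ F t)
    (hQ : ∀ t, c < t → ContinuousAt Q t)
    (hd : ∀ t, t ∈ Set.Ioo a b → deriv F t + Q t ≤ 0) :
    ∫ s in a..b, Q s ≤ F a - F b := by
  have hQmeas : ∀ t ∈ Set.Ioi c, StronglyMeasurableAtFilter Q (nhds t) MeasureTheory.volume :=
    ContinuousOn.stronglyMeasurableAtFilter isOpen_Ioi
      (fun t ht => (hQ t ht).continuousWithinAt)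
  have hQint : ∀ t, a ≤ t → IntervalIntegrable Q MeasureTheory.volume a t := by
    intro t ht
    apply ContinuousOn.intervalIntegrable
    intro s hs
    rw [Set.uIcc_of_le ht] at hs
    exact (hQ s (lt_of_lt_of_le hca hs.1)).continuousWithinAt
  have hprim : ∀ t ∈ Set.Icc a b, HasDerivAt (fun u => ∫ s in a..u, Q s) (Q t) t := by
    intro t ht
    exact intervalIntegral.integral_hasDerivAt_right (hQint t ht.1)
      (hQmeas t (lt_of_lt_of_le hca ht.1)) (hQ t (lt_of_lt_of_le hca ht.1))
  set G := fun t => F t + ∫ s in a..t, Q s with hG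
  have hGanti : AntitoneOn G (Set.Icc a b) := by
    apply antitoneOn_of_deriv_nonpos (convex_Icc a b)
    · intro t ht
      exact (((hF t (lt_of_lt_of_le hca ht.1)).continuousAt).add
        (hprim t ht).continuousAt).continuousWithinAt
    · rw [interior_Icc]
      intro t ht
      exact ((hF t (lt_of_lt_of_le hca ht.1.le)).add
        (hprim t (Set.Ioo_subset_Icc_self ht)).differentiableAt).differentiableWithinAt
    · rw [interior_Icc]
      intro t ht
      have h1 : DifferentiableAt ℝ F t := hF t (lt_of_lt_of_le hca ht.1.le)
      have h2 := hprim t (Set.Ioo_subset_Icc_self ht)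
      rw [hG]
      rw [deriv_fun_add h1 h2.differentiableAt, h2.deriv]
      exact hd t ht
  have h := hGanti (Set.mem_Icc.2 ⟨le_rfl, hab⟩) (Set.mem_Icc.2 ⟨hab, le_rfl⟩) hab
  simp only [hG, intervalIntegral.integral_same] at h
  linarith

end AuxHelper

/-- Core of the `1/e` (liminf-type) oscillation criterion: an eventually positive,
nonincreasing, differentiable solution of `z'(t) + P(t) z(t-1) ≤ 0` forces
`liminf_{t→∞} ∫_{t-1}^{t} P(s) ds ≤ 1/e`. -/
theorem liminf_integral_le_inv_e
    (z P : ℝ → ℝ) (T : ℝ)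
    (hdiff : ∀ t, T ≤ t → DifferentiableAt ℝ z t)
    (hmono : AntitoneOn z (Set.Ici T))
    (hpos : ∀ t, T ≤ t → 0 < z t)
    (hPc : Continuous P) (hPnn : ∀ t, 0 ≤ P t)
    (hineq : ∀ t, T < t → deriv z t + P t * z (t - 1) ≤ 0) :
    Filter.liminf (fun t => ∫ s in (t - 1)..t, P s) Filter.atTop ≤ 1 / Real.exp 1 := by
  by_contra hcon
  push_neg at hcon
  set A : ℝ → ℝ := fun t => ∫ s in (t - 1)..t, P s with hAdef
  have hepos : (0:ℝ) < 1 / Real.exp 1 := by positivity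
  -- extract an eventual lower bound L > 1/e for A
  have hSne : {a : ℝ | ∀ᶠ t in atTop, a ≤ A t}.Nonempty := by
    by_contra h
    rw [Set.not_nonempty_iff_eq_empty] at h
    rw [Filter.liminf_eq, h, Real.sSup_empty] at hcon
    linarith
  obtain ⟨L, hLmem, hL⟩ := exists_lt_of_lt_csSup hSne (by rw [← Filter.liminf_eq]; exact hcon)
  have hLpos : 0 < L := lt_trans hepos hL
  obtain ⟨T₁, hT₁⟩ := Filter.eventually_atTop.1 hLmem
  -- continuity facts
  have hzc : ∀ t, T ≤ t → ContinuousAt z t := fun t ht => (hdiff t ht).continuousAt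
  have hQc : ∀ t, T + 1 < t → ContinuousAt (fun s => P s * z (s - 1)) t := by
    intro t ht
    have hshift : ContinuousAt (fun s : ℝ => z (s - 1)) t := by
      have h1 : ContinuousAt (fun s : ℝ => s - 1) t :=
        (continuous_id.sub continuous_const).continuousAt
      exact ContinuousAt.comp (x := t) (g := z) (hzc (t - 1) (by linarith)) h1
    exact hPc.continuousAt.mul hshift
  have hQ2c : ∀ t, T + 1 < t → ContinuousAt (fun s => P s * (z (s - 1) / z s)) t := by
    intro t ht
    have hshift : ContinuousAt (fun s : ℝ => z (s - 1)) t := by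
      have h1 : ContinuousAt (fun s : ℝ => s - 1) t :=
        (continuous_id.sub continuous_const).continuousAt
      exact ContinuousAt.comp (x := t) (g := z) (hzc (t - 1) (by linarith)) h1
    exact hPc.continuousAt.mul
      (ContinuousAt.div hshift (hzc t (by linarith)) (hpos t (by linarith)).ne')
  -- key integral estimate 1
  have key : ∀ a b : ℝ, T + 2 ≤ a → a ≤ b →
      ∫ s in a..b, P s * z (s - 1) ≤ z a - z b := by
    intro a b ha hab
    refine aux_integral_le_sub z (fun s => P s * z (s - 1)) (show T + 1 < a by linarith) hab
      (fun t ht => hdiff t (by linarith)) (fun t ht => hQc t ht) ?_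
    intro t ht
    exact hineq t (by have := ht.1; linarith)
  -- key integral estimate 2 (log form)
  have key2 : ∀ a b : ℝ, T + 2 ≤ a → a ≤ b →
      ∫ s in a..b, P s * (z (s - 1) / z s) ≤ Real.log (z a) - Real.log (z b) := by
    intro a b ha hab
    refine aux_integral_le_sub (fun t => Real.log (z t)) (fun s => P s * (z (s - 1) / z s))
      (show T + 1 < a by linarith) hab
      (fun t ht => (hdiff t (by linarith)).log (hpos t (by linarith)).ne') (fun t ht => hQ2c t ht) ?_
    intro t ht
    have htT : T < t := by have := ht.1; linarith
    have hzt : 0 < z t := hpos t htT.le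
    have hder : deriv (fun t => Real.log (z t)) t = deriv z t / z t :=
      ((hdiff t htT.le).hasDerivAt.log hzt.ne').deriv
    rw [hder]
    have heq : deriv z t / z t + P t * (z (t - 1) / z t) = (deriv z t + P t * z (t - 1)) / z t := by
      ring
    rw [heq]
    exact div_nonpos_of_nonpos_of_nonneg (hineq t htT) hzt.le
  -- integrability helpers
  have hPint : ∀ x y : ℝ, IntervalIntegrable P MeasureTheory.volume x y :=
    fun x y => hPc.intervalIntegrable x y
  have hQint : ∀ x y : ℝ, T + 2 ≤ x → x ≤ y →
      IntervalIntegrable (fun s => P s * z (s - 1)) MeasureTheory.volume x y := by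
    intro x y hx hxy
    apply ContinuousOn.intervalIntegrable
    intro s hs
    rw [Set.uIcc_of_le hxy] at hs
    exact (hQc s (by have := hs.1; linarith)).continuousWithinAt
  have hQ2int : ∀ x y : ℝ, T + 2 ≤ x → x ≤ y →
      IntervalIntegrable (fun s => P s * (z (s - 1) / z s)) MeasureTheory.volume x y := by
    intro x y hx hxy
    apply ContinuousOn.intervalIntegrable
    intro s hs
    rw [Set.uIcc_of_le hxy] at hs
    exact (hQ2c s (by have := hs.1; linarith)).continuousWithinAt
  -- primitive of P
  set F0 : ℝ → ℝ := fun s => ∫ x in (0:ℝ)..s, P x with hF0def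
  have hF0 : ∀ s : ℝ, HasDerivAt F0 (P s) s := by
    intro s
    exact intervalIntegral.integral_hasDerivAt_right (hPint 0 s)
      (ContinuousOn.stronglyMeasurableAtFilter isOpen_univ hPc.continuousOn s (Set.mem_univ s))
      hPc.continuousAt
  have hsub : ∀ x y : ℝ, ∫ s in x..y, P s = F0 y - F0 x := by
    intro x y
    rw [hF0def]
    exact (intervalIntegral.integral_interval_sub_left
      (hPint 0 y) (hPint 0 x)).symm
  have hF0cont : Continuous F0 := by
    have : Differentiable ℝ F0 := fun s => (hF0 s).differentiableAt
    exact this.continuous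
  -- the frequent bound on z(s-1)/z s
  set M : ℝ := (2 / L) ^ 2 with hMdef
  have hfreq : ∃ᶠ s in atTop, z (s - 1) / z s ≤ M := by
    rw [Filter.frequently_atTop]
    intro t₀
    set t : ℝ := max t₀ (max T₁ (T + 4)) + 1 with htdef
    have ht₀ : t₀ ≤ t - 1 := by
      have := le_max_left t₀ (max T₁ (T + 4)); simp only [htdef]; linarith
    have htT₁ : T₁ ≤ t := by
      have h1 := le_max_left T₁ (T + 4)
      have h2 := le_max_right t₀ (max T₁ (T + 4)); simp only [htdef]; linarith
    have htT : T + 4 ≤ t - 1 := by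
      have h1 := le_max_right T₁ (T + 4)
      have h2 := le_max_right t₀ (max T₁ (T + 4)); simp only [htdef]; linarith
    have hAt : L ≤ A t := hT₁ t htT₁
    -- intermediate value: find r with ∫_r^t P = L/2
    have hgcont : ContinuousOn (fun s => F0 t - F0 s) (Set.Icc (t - 1) t) :=
      (continuous_const.sub hF0cont).continuousOn
    have hmem : L / 2 ∈ Set.Icc (F0 t - F0 t) (F0 t - F0 (t - 1)) := by
      constructor
      · simp; linarith
      · have : F0 t - F0 (t - 1) = A t := (hsub (t - 1) t).symm
        rw [this]; linarith
    obtain ⟨r, hrmem, hru⟩ := intermediate_value_Icc' (by linarith : t - 1 ≤ t) hgcont hmem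
    have hint_rt : ∫ s in r..t, P s = L / 2 := by rw [hsub r t]; exact hru
    have hrt1 : t - 1 ≤ r := hrmem.1
    have hrt : r ≤ t := hrmem.2
    have hint_tr : ∫ s in (t - 1)..r, P s = A t - L / 2 := by
      have hadd := intervalIntegral.integral_add_adjacent_intervals
        (hPint (t - 1) r) (hPint r t)
      rw [hint_rt] at hadd
      have : (∫ s in (t-1)..r, P s) + L / 2 = A t := hadd
      linarith
    -- positivity
    have hzr : 0 < z r := hpos r (by linarith)
    have hzt : 0 < z t := hpos t (by linarith)
    have hzt1 : 0 < z (t - 1) := hpos (t - 1) (by linarith)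
    have hzr1 : 0 < z (r - 1) := hpos (r - 1) (by linarith)
    -- estimate on [r, t]
    have e1 : ∫ s in r..t, P s * z (s - 1) ≤ z r - z t := key r t (by linarith) hrt
    have e2 : z (t - 1) * (L / 2) ≤ ∫ s in r..t, P s * z (s - 1) := by
      have hmono' : ∀ s ∈ Set.Icc r t, z (t - 1) * P s ≤ P s * z (s - 1) := by
        intro s hs
        have h1 : z (t - 1) ≤ z (s - 1) := by
          apply hmono (Set.mem_Ici.2 (by have := hs.1; linarith))
            (Set.mem_Ici.2 (by linarith)) (by have := hs.2; linarith)
        calc z (t - 1) * P s = P s * z (t - 1) := by ring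
          _ ≤ P s * z (s - 1) := mul_le_mul_of_nonneg_left h1 (hPnn s)
      have hmint := intervalIntegral.integral_mono_on hrt
        ((hPint r t).const_mul (z (t - 1)))
        (hQint r t (by linarith) hrt) hmono'
      rwa [intervalIntegral.integral_const_mul, hint_rt] at hmint
    -- estimate on [t-1, r]
    have e3 : ∫ s in (t - 1)..r, P s * z (s - 1) ≤ z (t - 1) - z r :=
      key (t - 1) r (by linarith) hrt1
    have e4 : z (r - 1) * (A t - L / 2) ≤ ∫ s in (t - 1)..r, P s * z (s - 1) := by
      have hmono' : ∀ s ∈ Set.Icc (t - 1) r, z (r - 1) * P s ≤ P s * z (s - 1) := by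
        intro s hs
        have h1 : z (r - 1) ≤ z (s - 1) := by
          apply hmono (Set.mem_Ici.2 (by have := hs.1; linarith))
            (Set.mem_Ici.2 (by linarith)) (by have := hs.2; linarith)
        calc z (r - 1) * P s = P s * z (r - 1) := by ring
          _ ≤ P s * z (s - 1) := mul_le_mul_of_nonneg_left h1 (hPnn s)
      have hmint := intervalIntegral.integral_mono_on hrt1
        ((hPint (t - 1) r).const_mul (z (r - 1)))
        (hQint (t - 1) r (by linarith) hrt1) hmono'
      rwa [intervalIntegral.integral_const_mul, hint_tr] at hmint
    refine ⟨r, by linarith, ?_⟩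
    -- combine: z r ≥ (L/2) z(t-1) ≥ (L/2)^2 z(r-1)
    have c1 : z (t - 1) * (L / 2) ≤ z r := by linarith
    have c2 : z (r - 1) * (L / 2) ≤ z (t - 1) := by nlinarith
    rw [div_le_iff₀ hzr, hMdef]
    rw [div_pow]
    rw [div_mul_eq_mul_div, le_div_iff₀ (by positivity : (0:ℝ) < L ^ 2)]
    nlinarith
  -- liminf machinery for f s = z(s-1)/z s
  set f : ℝ → ℝ := fun s => z (s - 1) / z s with hfdef
  have hev1 : ∀ᶠ s in atTop, 1 ≤ f s := by
    rw [Filter.eventually_atTop]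
    refine ⟨T + 1, fun s hs => ?_⟩
    have hzs : 0 < z s := hpos s (by linarith)
    rw [hfdef]
    rw [le_div_iff₀ hzs, one_mul]
    exact hmono (Set.mem_Ici.2 (by linarith)) (Set.mem_Ici.2 (by linarith)) (by linarith)
  have hbdd : Filter.IsBoundedUnder (· ≥ ·) atTop f :=
    ⟨1, by simpa only [Filter.eventually_map] using hev1⟩
  have hcob : Filter.IsCoboundedUnder (· ≥ ·) atTop f :=
    Filter.IsCoboundedUnder.of_frequently_le hfreq
  set w : ℝ := Filter.liminf f atTop with hwdef
  have h1w : 1 ≤ w := Filter.le_liminf_of_le hcob hev1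
  have hwpos : 0 < w := lt_of_lt_of_le one_pos h1w
  -- main lower bound w ≥ exp((w-ε)L) for small ε > 0
  have hkey : ∀ ε : ℝ, 0 < ε → ε < 1 → Real.exp ((w - ε) * L) ≤ w := by
    intro ε hε hε1
    have hev2 : ∀ᶠ s in atTop, w - ε < f s :=
      Filter.eventually_lt_of_lt_liminf (by rw [← hwdef]; linarith) hbdd
    obtain ⟨T₂, hT₂⟩ := Filter.eventually_atTop.1 hev2
    refine Filter.le_liminf_of_le hcob ?_
    rw [Filter.eventually_atTop]
    refine ⟨max (max (T₂ + 1) T₁) (T + 3), fun t ht => ?_⟩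
    have ht1 : T₂ + 1 ≤ t := le_trans (le_trans (le_max_left _ _) (le_max_left _ _)) ht
    have ht2 : T₁ ≤ t := le_trans (le_trans (le_max_right _ _) (le_max_left _ _)) ht
    have ht3 : T + 3 ≤ t := le_trans (le_max_right _ _) ht
    have hzt : 0 < z t := hpos t (by linarith)
    have hzt1 : 0 < z (t - 1) := hpos (t - 1) (by linarith)
    have e5 := key2 (t - 1) t (by linarith) (by linarith)
    have e6 : (w - ε) * A t ≤ ∫ s in (t - 1)..t, P s * (z (s - 1) / z s) := by
      have hmono' : ∀ s ∈ Set.Icc (t - 1) t, (w - ε) * P s ≤ P s * (z (s - 1) / z s) := by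
        intro s hs
        have hfs : w - ε ≤ f s := (hT₂ s (by have := hs.1; linarith)).le
        calc (w - ε) * P s = P s * (w - ε) := by ring
          _ ≤ P s * (z (s - 1) / z s) := mul_le_mul_of_nonneg_left hfs (hPnn s)
      have hmint := intervalIntegral.integral_mono_on (by linarith : t - 1 ≤ t)
        ((hPint (t - 1) t).const_mul (w - ε))
        (hQ2int (t - 1) t (by linarith) (by linarith)) hmono'
      rwa [intervalIntegral.integral_const_mul] at hmint
    have hAt : L ≤ A t := hT₁ t ht2
    have hwe : 0 < w - ε := by linarith
    have e7 : (w - ε) * L ≤ Real.log (z (t - 1)) - Real.log (z t) := by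
      have : (w - ε) * L ≤ (w - ε) * A t := mul_le_mul_of_nonneg_left hAt hwe.le
      linarith
    calc Real.exp ((w - ε) * L) ≤ Real.exp (Real.log (z (t - 1)) - Real.log (z t)) :=
          Real.exp_le_exp.2 e7
      _ = z (t - 1) / z t := by
          rw [Real.exp_sub, Real.exp_log hzt1, Real.exp_log hzt]
      _ = f t := rfl
  -- pass to the limit ε → 0⁺
  have hfin : Real.exp (w * L) ≤ w := by
    have hcontε : Filter.Tendsto (fun ε : ℝ => Real.exp ((w - ε) * L)) (nhdsWithin 0 (Set.Ioi 0))
        (nhds (Real.exp (w * L))) := by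
      have hc : Continuous (fun ε : ℝ => Real.exp ((w - ε) * L)) :=
        Real.continuous_exp.comp ((continuous_const.sub continuous_id).mul continuous_const)
      have := hc.tendsto 0
      simp only [sub_zero] at this
      exact this.mono_left nhdsWithin_le_nhds
    refine le_of_tendsto hcontε ?_
    filter_upwards [Ioo_mem_nhdsGT_of_mem (Set.mem_Ico.2 ⟨le_rfl, one_pos⟩)] with ε hε
    exact hkey ε hε.1 hε.2
  -- exp x ≥ e x
  have h2 : Real.exp 1 * (w * L) ≤ Real.exp (w * L) := by
    have ha := Real.add_one_le_exp (w * L - 1)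
    have : Real.exp (w * L) = Real.exp 1 * Real.exp (w * L - 1) := by
      rw [← Real.exp_add]; ring_nf
    rw [this]
    have he1 : (0:ℝ) < Real.exp 1 := Real.exp_pos 1
    nlinarith
  -- contradiction
  have heL : 1 < Real.exp 1 * L := by
    rw [div_lt_iff₀ (Real.exp_pos 1)] at hL
    linarith [hL]
  nlinarith
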